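/- Competitiveness via minimal preferred bundles: a price vector p is competitive if and only if there exists a feasible allocation x such that for every buyer j: x i j = b i for all i ∈ Ω'_j(p), ∑_{i∈Ω''_j(p)} x i j = d''_j(p), and x i j = 0 for all i outside Ω'_j(p) ∪ Ω''_j(p). -/

import Mathlib

open Finset

section MarketDefs

variable {Ω N : Type*}

/-- A bundle for a buyer with demand `dj`: at most `b i` copies of each object,
at most `dj` items in total. -/
def IsBundle [Fintype Ω] (b : Ω → ℕ) (dj : ℕ) (y : Ω → ℕ) : Prop :=
  (∀ i, y i ≤ b i) ∧ ∑ i, y i ≤ dj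

/-- Utility of bundle `y` at prices `p` for a buyer with per-unit valuations `v`. -/
noncomputable def utility [Fintype Ω] (v : Ω → ℕ) (p : Ω → ℝ) (y : Ω → ℕ) : ℝ :=
  ∑ i, ((v i : ℝ) - p i) * (y i : ℝ)

/-- `y` is a preferred bundle (member of the demand set `D_j(p)`). -/
def InDemand [Fintype Ω] (b : Ω → ℕ) (dj : ℕ) (v : Ω → ℕ) (p : Ω → ℝ) (y : Ω → ℕ) : Prop :=
  IsBundle b dj y ∧ ∀ z, IsBundle b dj z → utility v p z ≤ utility v p y

/-- Feasible allocation. -/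
def Feasible [Fintype Ω] [Fintype N] (b : Ω → ℕ) (d : N → ℕ) (x : Ω → N → ℕ) : Prop :=
  (∀ i, ∑ j, x i j ≤ b i) ∧ ∀ j, ∑ i, x i j ≤ d j

/-- Stable allocation at prices `p`: feasible, and every buyer gets a preferred bundle. -/
def Stable [Fintype Ω] [Fintype N] (b : Ω → ℕ) (d : N → ℕ) (v : Ω → N → ℕ)
    (p : Ω → ℝ) (x : Ω → N → ℕ) : Prop :=
  Feasible b d x ∧ ∀ j, InDemand b (d j) (fun i => v i j) p (fun i => x i j)

/-- Competitive price vector: nonnegative, and some allocation is stable for it. -/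
def Competitive [Fintype Ω] [Fintype N] (b : Ω → ℕ) (d : N → ℕ) (v : Ω → N → ℕ)
    (p : Ω → ℝ) : Prop :=
  (∀ i, 0 ≤ p i) ∧ ∃ x, Stable b d v p x

/-- Walrasian price vector: some stable allocation sells as much as possible. -/
def Walrasian [Fintype Ω] [Fintype N] (b : Ω → ℕ) (d : N → ℕ) (v : Ω → N → ℕ)
    (p : Ω → ℝ) : Prop :=
  (∀ i, 0 ≤ p i) ∧ ∃ x, Stable b d v p x ∧
    ∑ i, ∑ j, x i j = min (∑ i, b i) (∑ j, d j)

/-- Componentwise minimum Walrasian price vector. -/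
def MinWalrasian [Fintype Ω] [Fintype N] (b : Ω → ℕ) (d : N → ℕ) (v : Ω → N → ℕ)
    (p : Ω → ℝ) : Prop :=
  Walrasian b d v p ∧ ∀ q, Walrasian b d v q → ∀ i, p i ≤ q i

end MarketDefs

section TierDefs

variable {Ω N : Type*}

/-- The set `P` of positive payoffs `u i`. -/
noncomputable def posPayoffs [Fintype Ω] (u : Ω → ℝ) : Finset ℝ :=
  (Finset.univ.image u).filter (fun t => 0 < t)

/-- The threshold payoff `θ_j(p)`: the largest positive payoff value `t` such that the
supply of items with payoff at least `t` covers the demand, if it exists; otherwise the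
minimum positive payoff value (and junk value `0` if there is no positive payoff). -/
noncomputable def theta [Fintype Ω] (b : Ω → ℕ) (dj : ℕ) (u : Ω → ℝ) : ℝ :=
  if hQ : ((posPayoffs u).filter
      (fun t => dj ≤ ∑ i ∈ Finset.univ.filter (fun i => t ≤ u i), b i)).Nonempty then
    ((posPayoffs u).filter
      (fun t => dj ≤ ∑ i ∈ Finset.univ.filter (fun i => t ≤ u i), b i)).max' hQ
  else if hP : (posPayoffs u).Nonempty then (posPayoffs u).min' hP
  else 0

/-- `Ω'_j(p)`: objects with payoff strictly above the threshold. -/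
noncomputable def OmegaP [Fintype Ω] (b : Ω → ℕ) (dj : ℕ) (u : Ω → ℝ) : Finset Ω :=
  if dj = 0 ∨ posPayoffs u = ∅ then ∅
  else Finset.univ.filter (fun i => theta b dj u < u i)

/-- `Ω''_j(p)`: objects with payoff equal to the threshold. -/
noncomputable def OmegaPP [Fintype Ω] (b : Ω → ℕ) (dj : ℕ) (u : Ω → ℝ) : Finset Ω :=
  if dj = 0 ∨ posPayoffs u = ∅ then ∅
  else Finset.univ.filter (fun i => u i = theta b dj u)

/-- `Ω'''_j(p)`: objects with payoff zero. -/
noncomputable def OmegaPPP [Fintype Ω] (u : Ω → ℝ) : Finset Ω :=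
  Finset.univ.filter (fun i => u i = 0)

/-- `d'_j(p)`. -/
noncomputable def dPr [Fintype Ω] (b : Ω → ℕ) (dj : ℕ) (u : Ω → ℝ) : ℕ :=
  ∑ i ∈ OmegaP b dj u, b i

/-- `d''_j(p)`. -/
noncomputable def dPPr [Fintype Ω] (b : Ω → ℕ) (dj : ℕ) (u : Ω → ℝ) : ℕ :=
  min (∑ i ∈ OmegaPP b dj u, b i) (dj - dPr b dj u)

/-- Payoff function of buyer `j` at prices `p`. -/
noncomputable def payoff (v : Ω → N → ℕ) (p : Ω → ℝ) (j : N) (i : Ω) : ℝ :=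
  (v i j : ℝ) - p i

/-- `d_p(I)`: total demand that must be served from the item set `I`
(here `a - b` is truncated subtraction on `ℕ`, i.e. `max (0, a - b)`). -/
noncomputable def overDemand [Fintype Ω] [Fintype N] [DecidableEq Ω] (b : Ω → ℕ)
    (d : N → ℕ) (v : Ω → N → ℕ) (p : Ω → ℝ) (I : Finset Ω) : ℕ :=
  ∑ j : N,
    ((∑ i ∈ OmegaP b (d j) (payoff v p j) ∩ I, b i) +
      (dPPr b (d j) (payoff v p j) -
        ∑ i ∈ OmegaPP b (d j) (payoff v p j) \ I, min (b i) (dPPr b (d j) (payoff v p j))))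

end TierDefs

section KeyLemmas
set_option linter.unusedSectionVars false

open Finset

variable {Ω : Type*} [Fintype Ω] [DecidableEq Ω]

/-- The set of positive payoff levels whose upper level set covers the demand. -/
noncomputable def coverQ (b : Ω → ℕ) (dj : ℕ) (u : Ω → ℝ) : Finset ℝ :=
  (posPayoffs u).filter
    (fun t => dj ≤ ∑ i ∈ Finset.univ.filter (fun i => t ≤ u i), b i)

lemma mem_posPayoffs_of_pos {u : Ω → ℝ} {i : Ω} (h : 0 < u i) : u i ∈ posPayoffs u := by
  unfold posPayoffs
  exact Finset.mem_filter.mpr ⟨Finset.mem_image_of_mem u (Finset.mem_univ i), h⟩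

lemma theta_mem {b : Ω → ℕ} {dj : ℕ} {u : Ω → ℝ} (hP : (posPayoffs u).Nonempty) :
    theta b dj u ∈ posPayoffs u := by
  unfold theta
  split_ifs with hQ
  · exact Finset.mem_of_mem_filter _ (Finset.max'_mem _ hQ)
  · exact Finset.min'_mem _ hP

lemma theta_pos {b : Ω → ℕ} {dj : ℕ} {u : Ω → ℝ} (hP : (posPayoffs u).Nonempty) :
    0 < theta b dj u :=
  (Finset.mem_filter.mp (theta_mem (b := b) (dj := dj) hP)).2

lemma theta_eq_max' {b : Ω → ℕ} {dj : ℕ} {u : Ω → ℝ} (hQ : (coverQ b dj u).Nonempty) :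
    theta b dj u = (coverQ b dj u).max' hQ := by
  unfold coverQ at hQ ⊢
  unfold theta
  rw [dif_pos hQ]

lemma theta_eq_min' {b : Ω → ℕ} {dj : ℕ} {u : Ω → ℝ} (hP : (posPayoffs u).Nonempty)
    (hQ : ¬ (coverQ b dj u).Nonempty) :
    theta b dj u = (posPayoffs u).min' hP := by
  unfold coverQ at hQ
  unfold theta
  rw [dif_neg hQ, dif_pos hP]

lemma omegaP_eq {b : Ω → ℕ} {dj : ℕ} {u : Ω → ℝ} (hd : dj ≠ 0)
    (hP : (posPayoffs u).Nonempty) :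
    OmegaP b dj u = Finset.univ.filter (fun i => theta b dj u < u i) := by
  unfold OmegaP
  rw [if_neg]
  rintro (h | h)
  · exact hd h
  · exact hP.ne_empty h

lemma omegaPP_eq {b : Ω → ℕ} {dj : ℕ} {u : Ω → ℝ} (hd : dj ≠ 0)
    (hP : (posPayoffs u).Nonempty) :
    OmegaPP b dj u = Finset.univ.filter (fun i => u i = theta b dj u) := by
  unfold OmegaPP
  rw [if_neg]
  rintro (h | h)
  · exact hd h
  · exact hP.ne_empty h

lemma omega_disjoint {b : Ω → ℕ} {dj : ℕ} {u : Ω → ℝ} (hd : dj ≠ 0)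
    (hP : (posPayoffs u).Nonempty) :
    Disjoint (OmegaP b dj u) (OmegaPP b dj u) := by
  rw [omegaP_eq hd hP, omegaPP_eq hd hP]
  rw [Finset.disjoint_left]
  intro i hi hi'
  have h1 := (Finset.mem_filter.mp hi).2
  have h2 := (Finset.mem_filter.mp hi').2
  exact absurd h2 (ne_of_gt h1)

lemma omega_union {b : Ω → ℕ} {dj : ℕ} {u : Ω → ℝ} (hd : dj ≠ 0)
    (hP : (posPayoffs u).Nonempty) :
    OmegaP b dj u ∪ OmegaPP b dj u =
      Finset.univ.filter (fun i => theta b dj u ≤ u i) := by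
  rw [omegaP_eq hd hP, omegaPP_eq hd hP]
  ext i
  simp only [Finset.mem_union, Finset.mem_filter, Finset.mem_univ, true_and]
  constructor
  · rintro (h | h)
    · exact le_of_lt h
    · exact le_of_eq h.symm
  · intro h
    rcases lt_or_eq_of_le h with h' | h'
    · exact Or.inl h'
    · exact Or.inr h'.symm

lemma cover_of_Qne {b : Ω → ℕ} {dj : ℕ} {u : Ω → ℝ} (hQ : (coverQ b dj u).Nonempty) :
    dj ≤ ∑ i ∈ Finset.univ.filter (fun i => theta b dj u ≤ u i), b i ∧
      ∀ t ∈ posPayoffs u, theta b dj u < t →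
        ∑ i ∈ Finset.univ.filter (fun i => t ≤ u i), b i < dj := by
  have hmem := Finset.max'_mem _ hQ
  rw [← theta_eq_max' hQ] at hmem
  constructor
  · exact (Finset.mem_filter.mp hmem).2
  · intro t ht hlt
    by_contra hcon
    push_neg at hcon
    have : t ∈ coverQ b dj u := Finset.mem_filter.mpr ⟨ht, hcon⟩
    have := Finset.le_max' _ t this
    rw [← theta_eq_max' hQ] at this
    exact absurd hlt (not_lt.mpr this)

lemma cover_of_Qempty {b : Ω → ℕ} {dj : ℕ} {u : Ω → ℝ} (hP : (posPayoffs u).Nonempty)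
    (hQ : ¬ (coverQ b dj u).Nonempty) :
    (∀ i, 0 < u i → theta b dj u ≤ u i) ∧
      ∀ t ∈ posPayoffs u,
        ∑ i ∈ Finset.univ.filter (fun i => t ≤ u i), b i < dj := by
  have h2 : ∀ t ∈ posPayoffs u,
      ∑ i ∈ Finset.univ.filter (fun i => t ≤ u i), b i < dj := by
    intro t ht
    by_contra hcon
    push_neg at hcon
    exact hQ ⟨t, Finset.mem_filter.mpr ⟨ht, hcon⟩⟩
  refine ⟨?_, h2⟩
  intro i hi
  rw [theta_eq_min' hP hQ]
  exact Finset.min'_le _ _ (mem_posPayoffs_of_pos hi)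

lemma dPr_lt {b : Ω → ℕ} {dj : ℕ} {u : Ω → ℝ} (hd : dj ≠ 0)
    (hP : (posPayoffs u).Nonempty) : dPr b dj u < dj := by
  by_cases hQ : (coverQ b dj u).Nonempty
  · by_cases hS : (OmegaP b dj u).Nonempty
    · have hT : ((OmegaP b dj u).image u).Nonempty := hS.image u
      set t' := ((OmegaP b dj u).image u).min' hT with ht'def
      obtain ⟨i₀, hi₀, hui₀⟩ := Finset.mem_image.mp (Finset.min'_mem _ hT)
      have hθi₀ : theta b dj u < u i₀ := by
        have := hi₀
        rw [omegaP_eq hd hP] at this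
        exact (Finset.mem_filter.mp this).2
      have hθt' : theta b dj u < t' := by rw [ht'def, ← hui₀]; exact hθi₀
      have ht'P : t' ∈ posPayoffs u := by
        rw [ht'def, ← hui₀]
        exact mem_posPayoffs_of_pos (lt_trans (theta_pos (b := b) (dj := dj) hP) hθi₀)
      have hfilt : Finset.univ.filter (fun i => t' ≤ u i) = OmegaP b dj u := by
        ext i
        simp only [Finset.mem_filter, Finset.mem_univ, true_and]
        rw [omegaP_eq hd hP]
        simp only [Finset.mem_filter, Finset.mem_univ, true_and]
        constructor
        · intro h; exact lt_of_lt_of_le hθt' h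
        · intro h
          refine Finset.min'_le _ _ ?_
          refine Finset.mem_image_of_mem u ?_
          rw [omegaP_eq hd hP]
          exact Finset.mem_filter.mpr ⟨Finset.mem_univ i, h⟩
      have := (cover_of_Qne hQ).2 t' ht'P hθt'
      rw [hfilt] at this
      exact this
    · rw [Finset.not_nonempty_iff_eq_empty] at hS
      unfold dPr
      rw [hS, Finset.sum_empty]
      exact Nat.pos_of_ne_zero hd
  · have h := (cover_of_Qempty hP hQ).2 _ (theta_mem (b := b) (dj := dj) hP)
    refine lt_of_le_of_lt ?_ h
    unfold dPr
    refine Finset.sum_le_sum_of_subset ?_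
    rw [omegaP_eq hd hP]
    intro i hi
    simp only [Finset.mem_filter, Finset.mem_univ, true_and] at hi ⊢
    exact le_of_lt hi

lemma dsum_of_Qne {b : Ω → ℕ} {dj : ℕ} {u : Ω → ℝ} (hd : dj ≠ 0)
    (hP : (posPayoffs u).Nonempty) (hQ : (coverQ b dj u).Nonempty) :
    dPr b dj u + dPPr b dj u = dj := by
  have hcov := (cover_of_Qne hQ).1
  rw [← omega_union hd hP, Finset.sum_union (omega_disjoint hd hP)] at hcov
  have hlt := dPr_lt (b := b) hd hP
  have hdpr : dPr b dj u = ∑ i ∈ OmegaP b dj u, b i := rfl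
  rw [← hdpr] at hcov
  unfold dPPr
  omega

lemma dsum_of_Qempty {b : Ω → ℕ} {dj : ℕ} {u : Ω → ℝ} (hd : dj ≠ 0)
    (hP : (posPayoffs u).Nonempty) (hQ : ¬ (coverQ b dj u).Nonempty) :
    dPPr b dj u = ∑ i ∈ OmegaPP b dj u, b i ∧ dPr b dj u + dPPr b dj u ≤ dj := by
  have hcov := (cover_of_Qempty hP hQ).2 _ (theta_mem (b := b) (dj := dj) hP)
  rw [← omega_union hd hP, Finset.sum_union (omega_disjoint hd hP)] at hcov
  have hdpr : dPr b dj u = ∑ i ∈ OmegaP b dj u, b i := rfl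
  rw [← hdpr] at hcov
  unfold dPPr
  omega

lemma dsum_le {b : Ω → ℕ} {dj : ℕ} {u : Ω → ℝ} (hd : dj ≠ 0)
    (hP : (posPayoffs u).Nonempty) :
    dPr b dj u + dPPr b dj u ≤ dj := by
  by_cases hQ : (coverQ b dj u).Nonempty
  · exact le_of_eq (dsum_of_Qne hd hP hQ)
  · exact (dsum_of_Qempty hd hP hQ).2

lemma value_eq {b : Ω → ℕ} {dj : ℕ} {u : Ω → ℝ} (hd : dj ≠ 0)
    (hP : (posPayoffs u).Nonempty) (y : Ω → ℕ)
    (h1 : ∀ i ∈ OmegaP b dj u, y i = b i)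
    (h2 : ∑ i ∈ OmegaPP b dj u, y i = dPPr b dj u)
    (h3 : ∀ i, i ∉ OmegaP b dj u ∪ OmegaPP b dj u → y i = 0) :
    ∑ i, u i * (y i : ℝ) =
      ∑ i ∈ OmegaP b dj u, u i * (b i : ℝ) + theta b dj u * (dPPr b dj u : ℝ) := by
  rw [← Finset.sum_add_sum_compl (OmegaP b dj u ∪ OmegaPP b dj u) (fun i => u i * (y i : ℝ))]
  have hc : ∑ i ∈ (OmegaP b dj u ∪ OmegaPP b dj u)ᶜ, u i * (y i : ℝ) = 0 := by
    refine Finset.sum_eq_zero fun i hi => ?_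
    rw [h3 i (Finset.mem_compl.mp hi)]
    simp
  rw [hc, add_zero, Finset.sum_union (omega_disjoint hd hP)]
  have hA : ∑ i ∈ OmegaP b dj u, u i * (y i : ℝ) = ∑ i ∈ OmegaP b dj u, u i * (b i : ℝ) :=
    Finset.sum_congr rfl fun i hi => by rw [h1 i hi]
  have hB : ∑ i ∈ OmegaPP b dj u, u i * (y i : ℝ) = theta b dj u * (dPPr b dj u : ℝ) := by
    have : ∀ i ∈ OmegaPP b dj u, u i * (y i : ℝ) = theta b dj u * (y i : ℝ) := by
      intro i hi
      rw [omegaPP_eq hd hP] at hi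
      rw [(Finset.mem_filter.mp hi).2]
    rw [Finset.sum_congr rfl this, ← Finset.mul_sum, ← Nat.cast_sum, h2]
  rw [hA, hB]

lemma utility_bound {b : Ω → ℕ} {dj : ℕ} {u : Ω → ℝ} (hd : dj ≠ 0)
    (hP : (posPayoffs u).Nonempty) (z : Ω → ℕ)
    (hzb : ∀ i, z i ≤ b i) (hzd : ∑ i, z i ≤ dj) :
    ∑ i, u i * (z i : ℝ) ≤
      ∑ i ∈ OmegaP b dj u, u i * (b i : ℝ) + theta b dj u * (dPPr b dj u : ℝ) := by
  set θ := theta b dj u with hθ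
  by_cases hQ : (coverQ b dj u).Nonempty
  · have e1 : ∑ i, u i * (z i : ℝ) =
        (∑ i ∈ OmegaP b dj u, (u i - θ) * (z i : ℝ) +
          ∑ i ∈ (OmegaP b dj u)ᶜ, (u i - θ) * (z i : ℝ)) + θ * ∑ i, (z i : ℝ) := by
      rw [Finset.sum_add_sum_compl (OmegaP b dj u) (fun i => (u i - θ) * (z i : ℝ)),
        Finset.mul_sum, ← Finset.sum_add_distrib]
      exact Finset.sum_congr rfl fun i _ => by ring
    have hA : ∑ i ∈ OmegaP b dj u, (u i - θ) * (z i : ℝ) ≤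
        ∑ i ∈ OmegaP b dj u, (u i - θ) * (b i : ℝ) := by
      refine Finset.sum_le_sum fun i hi => ?_
      have hθi : θ < u i := by
        rw [omegaP_eq hd hP] at hi; exact (Finset.mem_filter.mp hi).2
      exact mul_le_mul_of_nonneg_left (Nat.cast_le.mpr (hzb i)) (by linarith)
    have hB : ∑ i ∈ (OmegaP b dj u)ᶜ, (u i - θ) * (z i : ℝ) ≤ 0 := by
      refine Finset.sum_nonpos fun i hi => ?_
      have : ¬ θ < u i := by
        rw [omegaP_eq hd hP] at hi
        intro hcon
        exact (Finset.mem_compl.mp hi)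
          (Finset.mem_filter.mpr ⟨Finset.mem_univ i, hcon⟩)
      exact mul_nonpos_of_nonpos_of_nonneg (by linarith [not_lt.mp this]) (Nat.cast_nonneg _)
    have hC : θ * ∑ i, (z i : ℝ) ≤ θ * dj := by
      refine mul_le_mul_of_nonneg_left ?_ (le_of_lt (theta_pos (b := b) (dj := dj) hP))
      rw [← Nat.cast_sum]
      exact_mod_cast hzd
    have hdsum : ((dj : ℝ)) = (dPr b dj u : ℝ) + (dPPr b dj u : ℝ) := by
      exact_mod_cast (dsum_of_Qne hd hP hQ).symm
    have hsub : ∑ i ∈ OmegaP b dj u, (u i - θ) * (b i : ℝ) =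
        ∑ i ∈ OmegaP b dj u, u i * (b i : ℝ) - θ * (dPr b dj u : ℝ) := by
      rw [Finset.sum_congr rfl (fun i _ => sub_mul (u i) θ ((b i : ℝ))),
        Finset.sum_sub_distrib, ← Finset.mul_sum]
      unfold dPr
      rw [Nat.cast_sum]
    rw [e1]
    rw [hsub] at hA
    have hmul : θ * (dj : ℝ) = θ * (dPr b dj u : ℝ) + θ * (dPPr b dj u : ℝ) := by
      rw [hdsum]; ring
    linarith
  · obtain ⟨hθmin, -⟩ := cover_of_Qempty hP hQ
    have hd2 := (dsum_of_Qempty hd hP hQ).1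
    have hM : ∑ i ∈ OmegaP b dj u, u i * (b i : ℝ) + θ * (dPPr b dj u : ℝ) =
        ∑ i ∈ OmegaP b dj u ∪ OmegaPP b dj u, u i * (b i : ℝ) := by
      rw [Finset.sum_union (omega_disjoint hd hP)]
      congr 1
      have : ∀ i ∈ OmegaPP b dj u, u i * (b i : ℝ) = θ * (b i : ℝ) := by
        intro i hi
        rw [omegaPP_eq hd hP] at hi
        rw [(Finset.mem_filter.mp hi).2]
      rw [Finset.sum_congr rfl this, ← Finset.mul_sum, hd2, Nat.cast_sum]
    rw [hM, ← Finset.sum_add_sum_compl (OmegaP b dj u ∪ OmegaPP b dj u)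
      (fun i => u i * (z i : ℝ))]
    have hcompl : ∑ i ∈ (OmegaP b dj u ∪ OmegaPP b dj u)ᶜ, u i * (z i : ℝ) ≤ 0 := by
      refine Finset.sum_nonpos fun i hi => ?_
      have hui : u i ≤ 0 := by
        by_contra hcon
        push_neg at hcon
        have hθle := hθmin i hcon
        have : i ∈ OmegaP b dj u ∪ OmegaPP b dj u := by
          rw [omega_union hd hP]
          exact Finset.mem_filter.mpr ⟨Finset.mem_univ i, hθle⟩
        exact (Finset.mem_compl.mp hi) this
      exact mul_nonpos_of_nonpos_of_nonneg hui (Nat.cast_nonneg _)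
    have hmain : ∑ i ∈ OmegaP b dj u ∪ OmegaPP b dj u, u i * (z i : ℝ) ≤
        ∑ i ∈ OmegaP b dj u ∪ OmegaPP b dj u, u i * (b i : ℝ) := by
      refine Finset.sum_le_sum fun i hi => ?_
      have : θ ≤ u i := by
        rw [omega_union hd hP] at hi
        exact (Finset.mem_filter.mp hi).2
      exact mul_le_mul_of_nonneg_left (Nat.cast_le.mpr (hzb i))
        (le_trans (le_of_lt (theta_pos (b := b) (dj := dj) hP)) this)
    linarith

lemma exists_part {b : Ω → ℕ} (s : Finset Ω) (m : ℕ) (hm : m ≤ ∑ i ∈ s, b i) :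
    ∃ w : Ω → ℕ, (∀ i, w i ≤ b i) ∧ (∀ i, i ∉ s → w i = 0) ∧ ∑ i ∈ s, w i = m := by
  induction s using Finset.induction_on generalizing m with
  | empty =>
    simp only [Finset.sum_empty, Nat.le_zero] at hm
    exact ⟨fun _ => 0, fun i => Nat.zero_le _, fun _ _ => rfl, by simp [hm]⟩
  | insert _ _ ha ih =>
    rename_i a s
    rw [Finset.sum_insert ha] at hm
    obtain ⟨w, hw1, hw2, hw3⟩ := ih (m - min m (b a)) (by omega)
    refine ⟨Function.update w a (min m (b a)), ?_, ?_, ?_⟩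
    · intro i
      rcases eq_or_ne i a with rfl | h
      · rw [Function.update_self]; omega
      · rw [Function.update_of_ne h]; exact hw1 i
    · intro i hi
      have hia : i ≠ a := fun h => hi (h ▸ Finset.mem_insert_self a s)
      have his : i ∉ s := fun h => hi (Finset.mem_insert_of_mem h)
      rw [Function.update_of_ne hia]
      exact hw2 i his
    · rw [Finset.sum_insert ha, Function.update_self]
      have he : ∑ i ∈ s, Function.update w a (min m (b a)) i = ∑ i ∈ s, w i :=
        Finset.sum_congr rfl fun i hi => Function.update_of_ne (by rintro rfl; exact ha hi) _ _
      rw [he, hw3]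
      omega

lemma struct_lemma {b : Ω → ℕ} {dj : ℕ} {u : Ω → ℝ} (hd : dj ≠ 0)
    (hP : (posPayoffs u).Nonempty) (y : Ω → ℕ)
    (hyb : ∀ i, y i ≤ b i) (hyd : ∑ i, y i ≤ dj)
    (hopt : ∀ z : Ω → ℕ, (∀ i, z i ≤ b i) → ∑ i, z i ≤ dj →
      ∑ i, u i * (z i : ℝ) ≤ ∑ i, u i * (y i : ℝ)) :
    (∀ i ∈ OmegaP b dj u, y i = b i) ∧
      ∑ i ∈ OmegaPP b dj u, y i = dPPr b dj u := by
  set θ := theta b dj u with hθ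
  -- construct the canonical minimal bundle y₀
  have hle : dPPr b dj u ≤ ∑ i ∈ OmegaPP b dj u, b i := Nat.min_le_left _ _
  obtain ⟨w, hw1, hw2, hw3⟩ := exists_part (OmegaPP b dj u) _ hle
  set y₀ : Ω → ℕ := fun i => if i ∈ OmegaP b dj u then b i else w i with hy₀
  have hdisj := omega_disjoint (b := b) hd hP
  have hy₀b : ∀ i, y₀ i ≤ b i := by
    intro i
    by_cases h : i ∈ OmegaP b dj u <;> simp [hy₀, h, hw1 i]
  have hy₀1 : ∀ i ∈ OmegaP b dj u, y₀ i = b i := fun i hi => by simp [hy₀, hi]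
  have hy₀2 : ∑ i ∈ OmegaPP b dj u, y₀ i = dPPr b dj u := by
    rw [← hw3]
    refine Finset.sum_congr rfl fun i hi => ?_
    have : i ∉ OmegaP b dj u := Finset.disjoint_right.mp hdisj hi
    simp [hy₀, this]
  have hy₀3 : ∀ i, i ∉ OmegaP b dj u ∪ OmegaPP b dj u → y₀ i = 0 := by
    intro i hi
    rw [Finset.mem_union] at hi
    push_neg at hi
    simp [hy₀, hi.1, hw2 i hi.2]
  have hy₀d : ∑ i, y₀ i ≤ dj := by
    rw [← Finset.sum_add_sum_compl (OmegaP b dj u ∪ OmegaPP b dj u) y₀]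
    have hc : ∑ i ∈ (OmegaP b dj u ∪ OmegaPP b dj u)ᶜ, y₀ i = 0 :=
      Finset.sum_eq_zero fun i hi => hy₀3 i (Finset.mem_compl.mp hi)
    rw [hc, add_zero, Finset.sum_union hdisj]
    have h1 : ∑ i ∈ OmegaP b dj u, y₀ i = dPr b dj u :=
      Finset.sum_congr rfl hy₀1
    rw [h1, hy₀2]
    exact dsum_le hd hP
  -- the utility of y equals the optimal value M
  have hval := value_eq hd hP y₀ hy₀1 hy₀2 hy₀3
  have hMy : ∑ i, u i * (y i : ℝ) =
      ∑ i ∈ OmegaP b dj u, u i * (b i : ℝ) + θ * (dPPr b dj u : ℝ) := by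
    refine le_antisymm (utility_bound hd hP y hyb hyd) ?_
    rw [← hval]
    exact hopt y₀ hy₀b hy₀d
  by_cases hQ : (coverQ b dj u).Nonempty
  · -- case: theta covers demand
    have hdsum := dsum_of_Qne hd hP hQ
    have e1 : ∑ i, u i * (y i : ℝ) =
        (∑ i ∈ OmegaP b dj u, (u i - θ) * (y i : ℝ) +
          ∑ i ∈ (OmegaP b dj u)ᶜ, (u i - θ) * (y i : ℝ)) + θ * ∑ i, (y i : ℝ) := by
      rw [Finset.sum_add_sum_compl (OmegaP b dj u) (fun i => (u i - θ) * (y i : ℝ)),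
        Finset.mul_sum, ← Finset.sum_add_distrib]
      exact Finset.sum_congr rfl fun i _ => by ring
    have hAle : ∀ i ∈ OmegaP b dj u, (u i - θ) * (y i : ℝ) ≤ (u i - θ) * (b i : ℝ) := by
      intro i hi
      have hθi : θ < u i := by
        rw [omegaP_eq hd hP] at hi; exact (Finset.mem_filter.mp hi).2
      exact mul_le_mul_of_nonneg_left (Nat.cast_le.mpr (hyb i)) (by linarith)
    have hBle : ∀ i ∈ (OmegaP b dj u)ᶜ, (u i - θ) * (y i : ℝ) ≤ 0 := by
      intro i hi
      have : ¬ θ < u i := by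
        rw [omegaP_eq hd hP] at hi
        intro hcon
        exact (Finset.mem_compl.mp hi)
          (Finset.mem_filter.mpr ⟨Finset.mem_univ i, hcon⟩)
      exact mul_nonpos_of_nonpos_of_nonneg (by linarith [not_lt.mp this]) (Nat.cast_nonneg _)
    have hA : ∑ i ∈ OmegaP b dj u, (u i - θ) * (y i : ℝ) ≤
        ∑ i ∈ OmegaP b dj u, (u i - θ) * (b i : ℝ) := Finset.sum_le_sum hAle
    have hB : ∑ i ∈ (OmegaP b dj u)ᶜ, (u i - θ) * (y i : ℝ) ≤ 0 :=
      Finset.sum_nonpos hBle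
    have hC : (∑ i, (y i : ℝ)) ≤ (dj : ℝ) := by
      rw [← Nat.cast_sum]; exact_mod_cast hyd
    have hθpos := theta_pos (b := b) (dj := dj) hP
    have hdsumR : ((dj : ℝ)) = (dPr b dj u : ℝ) + (dPPr b dj u : ℝ) := by
      exact_mod_cast hdsum.symm
    have hsub : ∑ i ∈ OmegaP b dj u, (u i - θ) * (b i : ℝ) =
        ∑ i ∈ OmegaP b dj u, u i * (b i : ℝ) - θ * (dPr b dj u : ℝ) := by
      rw [Finset.sum_congr rfl (fun i _ => sub_mul (u i) θ ((b i : ℝ))),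
        Finset.sum_sub_distrib, ← Finset.mul_sum]
      unfold dPr
      rw [Nat.cast_sum]
    -- equalities forced
    have hCθ : θ * ∑ i, (y i : ℝ) ≤ θ * dj :=
      mul_le_mul_of_nonneg_left hC (le_of_lt hθpos)
    have hAeq : ∑ i ∈ OmegaP b dj u, (u i - θ) * (y i : ℝ) =
        ∑ i ∈ OmegaP b dj u, (u i - θ) * (b i : ℝ) := by
      rw [e1] at hMy; rw [hsub] at hA ⊢; nlinarith
    have hBeq : ∑ i ∈ (OmegaP b dj u)ᶜ, (u i - θ) * (y i : ℝ) = 0 := by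
      rw [e1] at hMy; rw [hsub] at hA; nlinarith
    have hCeq : ∑ i, (y i : ℝ) = (dj : ℝ) := by
      rw [e1] at hMy; rw [hsub] at hA
      nlinarith
    have hyeqb : ∀ i ∈ OmegaP b dj u, y i = b i := by
      intro i hi
      have := (Finset.sum_eq_sum_iff_of_le hAle).mp hAeq i hi
      have hθi : θ < u i := by
        rw [omegaP_eq hd hP] at hi; exact (Finset.mem_filter.mp hi).2
      have hne : u i - θ ≠ 0 := by linarith
      have := mul_left_cancel₀ hne this
      exact_mod_cast this
    have hzero : ∀ i, i ∉ OmegaP b dj u ∪ OmegaPP b dj u → y i = 0 := by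
      intro i hi
      rw [Finset.mem_union] at hi
      push_neg at hi
      have hic : i ∈ (OmegaP b dj u)ᶜ := Finset.mem_compl.mpr hi.1
      have := (Finset.sum_eq_zero_iff_of_nonpos hBle).mp hBeq i hic
      have hne : u i - θ ≠ 0 := by
        have hne2 : u i ≠ θ := by
          intro hcon
          refine hi.2 ?_
          rw [omegaPP_eq hd hP]
          exact Finset.mem_filter.mpr ⟨Finset.mem_univ i, hcon⟩
        intro hcon
        exact hne2 (by linarith)
      have : (y i : ℝ) = 0 := by
        rcases mul_eq_zero.mp this with h | h
        · exact absurd h hne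
        · exact h
      exact_mod_cast this
    refine ⟨hyeqb, ?_⟩
    have hsumy : ∑ i, y i = dj := by exact_mod_cast hCeq
    have hsplit : ∑ i, y i = ∑ i ∈ OmegaP b dj u, y i + ∑ i ∈ OmegaPP b dj u, y i +
        ∑ i ∈ (OmegaP b dj u ∪ OmegaPP b dj u)ᶜ, y i := by
      rw [← Finset.sum_union hdisj, Finset.sum_add_sum_compl]
    have hc0 : ∑ i ∈ (OmegaP b dj u ∪ OmegaPP b dj u)ᶜ, y i = 0 :=
      Finset.sum_eq_zero fun i hi => hzero i (Finset.mem_compl.mp hi)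
    have hS'y : ∑ i ∈ OmegaP b dj u, y i = dPr b dj u :=
      Finset.sum_congr rfl hyeqb
    rw [hsplit, hc0, hS'y] at hsumy
    omega
  · -- case: no covering threshold
    obtain ⟨hθmin, -⟩ := cover_of_Qempty hP hQ
    have hd2 := (dsum_of_Qempty hd hP hQ).1
    have hθpos := theta_pos (b := b) (dj := dj) hP
    have hM : ∑ i ∈ OmegaP b dj u, u i * (b i : ℝ) + θ * (dPPr b dj u : ℝ) =
        ∑ i ∈ OmegaP b dj u ∪ OmegaPP b dj u, u i * (b i : ℝ) := by
      rw [Finset.sum_union hdisj]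
      congr 1
      have : ∀ i ∈ OmegaPP b dj u, u i * (b i : ℝ) = θ * (b i : ℝ) := by
        intro i hi
        rw [omegaPP_eq hd hP] at hi
        rw [(Finset.mem_filter.mp hi).2]
      rw [Finset.sum_congr rfl this, ← Finset.mul_sum, hd2, Nat.cast_sum]
    have e1 : ∑ i, u i * (y i : ℝ) =
        ∑ i ∈ OmegaP b dj u ∪ OmegaPP b dj u, u i * (y i : ℝ) +
          ∑ i ∈ (OmegaP b dj u ∪ OmegaPP b dj u)ᶜ, u i * (y i : ℝ) :=
      (Finset.sum_add_sum_compl _ _).symm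
    have hBle : ∀ i ∈ (OmegaP b dj u ∪ OmegaPP b dj u)ᶜ, u i * (y i : ℝ) ≤ 0 := by
      intro i hi
      have hui : u i ≤ 0 := by
        by_contra hcon
        push_neg at hcon
        have hθle := hθmin i hcon
        refine (Finset.mem_compl.mp hi) ?_
        rw [omega_union hd hP]
        exact Finset.mem_filter.mpr ⟨Finset.mem_univ i, hθle⟩
      exact mul_nonpos_of_nonpos_of_nonneg hui (Nat.cast_nonneg _)
    have hAle : ∀ i ∈ OmegaP b dj u ∪ OmegaPP b dj u,
        u i * (y i : ℝ) ≤ u i * (b i : ℝ) := by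
      intro i hi
      have : θ ≤ u i := by
        rw [omega_union hd hP] at hi
        exact (Finset.mem_filter.mp hi).2
      exact mul_le_mul_of_nonneg_left (Nat.cast_le.mpr (hyb i)) (by linarith)
    have hA : ∑ i ∈ OmegaP b dj u ∪ OmegaPP b dj u, u i * (y i : ℝ) ≤
        ∑ i ∈ OmegaP b dj u ∪ OmegaPP b dj u, u i * (b i : ℝ) := Finset.sum_le_sum hAle
    have hB : ∑ i ∈ (OmegaP b dj u ∪ OmegaPP b dj u)ᶜ, u i * (y i : ℝ) ≤ 0 :=
      Finset.sum_nonpos hBle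
    have hAeq : ∑ i ∈ OmegaP b dj u ∪ OmegaPP b dj u, u i * (y i : ℝ) =
        ∑ i ∈ OmegaP b dj u ∪ OmegaPP b dj u, u i * (b i : ℝ) := by
      rw [e1, hM] at hMy; linarith
    have hyeqb : ∀ i ∈ OmegaP b dj u ∪ OmegaPP b dj u, y i = b i := by
      intro i hi
      have := (Finset.sum_eq_sum_iff_of_le hAle).mp hAeq i hi
      have hupos : 0 < u i := by
        have : θ ≤ u i := by
          rw [omega_union hd hP] at hi
          exact (Finset.mem_filter.mp hi).2
        linarith
      have := mul_left_cancel₀ (ne_of_gt hupos) this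
      exact_mod_cast this
    constructor
    · intro i hi
      exact hyeqb i (Finset.mem_union_left _ hi)
    · rw [hd2]
      exact Finset.sum_congr rfl fun i hi => hyeqb i (Finset.mem_union_right _ hi)

end KeyLemmas

/-- competitiveness via minimal preferred bundles. -/
theorem competitive_iff_minimal_preferred_bundles
    {Ω N : Type*} [Fintype Ω] [Fintype N] [DecidableEq Ω]
    (b : Ω → ℕ) (d : N → ℕ) (v : Ω → N → ℕ)
    (p : Ω → ℝ) (hp : ∀ i, 0 ≤ p i) :
    Competitive b d v p ↔
      ∃ x : Ω → N → ℕ, Feasible b d x ∧ ∀ j,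
        (∀ i ∈ OmegaP b (d j) (payoff v p j), x i j = b i) ∧
        (∑ i ∈ OmegaPP b (d j) (payoff v p j), x i j = dPPr b (d j) (payoff v p j)) ∧
        (∀ i, i ∉ OmegaP b (d j) (payoff v p j) ∪ OmegaPP b (d j) (payoff v p j) →
          x i j = 0) := by
  constructor
  · rintro ⟨-, x, hfeas, hdem⟩
    refine ⟨fun i j => if i ∈ OmegaP b (d j) (payoff v p j) ∪ OmegaPP b (d j) (payoff v p j)
      then x i j else 0, ⟨?_, ?_⟩, ?_⟩
    · intro i
      refine le_trans (Finset.sum_le_sum fun j _ => ?_) (hfeas.1 i)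
      dsimp only
      split_ifs <;> simp
    · intro j
      refine le_trans (Finset.sum_le_sum fun i _ => ?_) (hfeas.2 j)
      dsimp only
      split_ifs <;> simp
    · intro j
      dsimp only
      set u := payoff v p j with hu
      by_cases hdeg : d j = 0 ∨ posPayoffs u = ∅
      · have hS' : OmegaP b (d j) u = ∅ := by unfold OmegaP; rw [if_pos hdeg]
        have hS'' : OmegaPP b (d j) u = ∅ := by unfold OmegaPP; rw [if_pos hdeg]
        refine ⟨?_, ?_, ?_⟩
        · intro i hi
          rw [hS'] at hi
          exact absurd hi (Finset.notMem_empty i)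
        · rw [hS'', Finset.sum_empty]
          unfold dPPr
          rw [hS'', Finset.sum_empty]
          simp
        · intro i hi
          rw [if_neg hi]
      · push_neg at hdeg
        obtain ⟨hd0, hPne⟩ := hdeg
        have hP : (posPayoffs u).Nonempty := hPne
        have hbundle := (hdem j).1
        have hyb : ∀ i, x i j ≤ b i := hbundle.1
        have hyd : ∑ i, x i j ≤ d j := hbundle.2
        have hopt : ∀ z : Ω → ℕ, (∀ i, z i ≤ b i) → ∑ i, z i ≤ d j →
            ∑ i, u i * (z i : ℝ) ≤ ∑ i, u i * ((x i j : ℕ) : ℝ) := by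
          intro z hzb hzd
          exact (hdem j).2 z ⟨hzb, hzd⟩
        obtain ⟨h1, h2⟩ := struct_lemma hd0 hP (fun i => x i j) hyb hyd hopt
        refine ⟨?_, ?_, ?_⟩
        · intro i hi
          rw [if_pos (Finset.mem_union_left _ hi)]
          exact h1 i hi
        · rw [← h2]
          exact Finset.sum_congr rfl fun i hi => by
            rw [if_pos (Finset.mem_union_right _ hi)]
        · intro i hi
          rw [if_neg hi]
  · rintro ⟨x, hfeas, hcond⟩
    refine ⟨hp, x, hfeas, ?_⟩
    intro j
    have hyb : ∀ i, x i j ≤ b i := fun i =>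
      le_trans (Finset.single_le_sum (fun j _ => Nat.zero_le _) (Finset.mem_univ j))
        (hfeas.1 i)
    have hyd : ∑ i, x i j ≤ d j := hfeas.2 j
    refine ⟨⟨hyb, hyd⟩, ?_⟩
    intro z hz
    obtain ⟨hc1, hc2, hc3⟩ := hcond j
    set u := payoff v p j with hu
    have hutil : ∀ w : Ω → ℕ, utility (fun i => v i j) p w = ∑ i, u i * (w i : ℝ) :=
      fun w => rfl
    by_cases hdeg : d j = 0 ∨ posPayoffs u = ∅
    · have hS' : OmegaP b (d j) u = ∅ := by unfold OmegaP; rw [if_pos hdeg]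
      have hS'' : OmegaPP b (d j) u = ∅ := by unfold OmegaPP; rw [if_pos hdeg]
      have hy0 : ∀ i, x i j = 0 := by
        intro i
        refine hc3 i ?_
        rw [hS', hS'']
        simp
      have hRHS : utility (fun i => v i j) p (fun i => x i j) = 0 := by
        rw [hutil]
        exact Finset.sum_eq_zero fun i _ => by rw [hy0 i]; simp
      rw [hRHS, hutil]
      rcases hdeg with h0 | hPe
      · have hz0 : ∀ i, z i = 0 := by
          have h := hz.2
          rw [h0, Nat.le_zero, Finset.sum_eq_zero_iff] at h
          exact fun i => h i (Finset.mem_univ i)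
        refine le_of_eq (Finset.sum_eq_zero fun i _ => by rw [hz0 i]; simp)
      · have hnp : ∀ i, u i ≤ 0 := by
          intro i
          by_contra hcon
          push_neg at hcon
          have hmem := mem_posPayoffs_of_pos hcon
          rw [hPe] at hmem
          exact absurd hmem (Finset.notMem_empty _)
        exact Finset.sum_nonpos fun i _ =>
          mul_nonpos_of_nonpos_of_nonneg (hnp i) (Nat.cast_nonneg _)
    · push_neg at hdeg
      obtain ⟨hd0, hPne⟩ := hdeg
      have hP : (posPayoffs u).Nonempty := hPne
      have hvz := utility_bound hd0 hP z hz.1 hz.2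
      have hvy := value_eq hd0 hP (fun i => x i j) hc1 hc2 hc3
      rw [hutil, hutil, hvy]
      exact hvz
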